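/- arXiv:2003.07009 — 4 statements merged into one kernel-verified Lean document; each statement's English description precedes it below -/
import Mathlib

section
/- If x, y ∈ ℝⁿ are nonnegative vectors in decreasing sorted order and x strictly dominates y (every prefix sum of x strictly exceeds that of y), then there exists a doubly stochastic n×n matrix P such that (Px)ᵢ > yᵢ for every i. -/
open Finset Matrix

private def pre {n : ℕ} (f : Fin n → ℝ) (k : Fin n) : ℝ :=
  ∑ i ∈ univ.filter (· ≤ k), f i

private lemma filter_le_eq_map {n : ℕ} (k : Fin n) :
    (univ.filter (· ≤ k) : Finset (Fin n)) =
      (univ : Finset (Fin (k.val + 1))).map (Fin.castLEEmb k.isLt) := by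
  ext i
  simp only [mem_filter, mem_univ, true_and, mem_map]
  constructor
  · intro h
    exact ⟨⟨i.val, by omega⟩, by ext; simp⟩
  · rintro ⟨j, -, rfl⟩
    simpa [Fin.le_def, Fin.castLEEmb] using Nat.lt_succ_iff.mp j.isLt

private lemma pre_eq_sum {n : ℕ} (f : Fin n → ℝ) (k : Fin n) :
    pre f k = ∑ i : Fin (k.val + 1), f (Fin.castLE k.isLt i) := by
  rw [pre, filter_le_eq_map, Finset.sum_map]
  rfl

private lemma card_prefilter {n : ℕ} (k : Fin n) :
    (univ.filter (· ≤ k) : Finset (Fin n)).card = k.val + 1 := by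
  rw [filter_le_eq_map, Finset.card_map, Finset.card_univ, Fintype.card_fin]

private lemma pre_zero {n : ℕ} (f : Fin (n + 1) → ℝ) :
    pre f 0 = f 0 := by
  rw [pre_eq_sum]
  simp
  exact Fin.sum_univ_one _

private lemma pre_succ {m : ℕ} (f : Fin (m + 1) → ℝ) (k : Fin m) :
    pre f k.succ = f 0 + pre (fun i => f i.succ) k := by
  rw [pre_eq_sum, pre_eq_sum, Fin.sum_univ_succ]
  have h0 : f (Fin.castLE k.succ.isLt 0) = f 0 := by congr 1
  rw [h0]
  exact congrArg _ (Finset.sum_congr rfl fun i _ => congrArg f (by ext; simp))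

private lemma strictMono_le_apply {k n : ℕ} (e : Fin k → Fin n) (he : StrictMono e) :
    ∀ i : Fin k, (i : ℕ) ≤ (e i : ℕ) := by
  have key : ∀ j : ℕ, ∀ h : j < k, j ≤ (e ⟨j, h⟩ : ℕ) := by
    intro j
    induction j with
    | zero => exact fun _ => Nat.zero_le _
    | succ m ih =>
      intro h
      have hm : m < k := Nat.lt_of_succ_lt h
      have h1 : e ⟨m, hm⟩ < e ⟨m + 1, h⟩ := he (by simp [Fin.lt_def])
      have h2 := ih hm
      have := Fin.lt_def.mp h1
      omega
  exact fun i => key i.val i.isLt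

private lemma sum_subset_le_pre {n : ℕ} (w : Fin n → ℝ)
    (hw : ∀ i j : Fin n, i ≤ j → w j ≤ w i) (T : Finset (Fin n)) (k : Fin n)
    (hT : T.card = k.val + 1) :
    ∑ i ∈ T, w i ≤ ∑ i ∈ univ.filter (· ≤ k), w i := by
  classical
  have hsumT : ∑ i ∈ T, w i = ∑ i : Fin (k.val + 1), w (T.orderEmbOfFin hT i) := by
    rw [← Finset.sum_attach T w]
    exact (Fintype.sum_equiv (T.orderIsoOfFin hT).toEquiv
      (fun i => w (T.orderEmbOfFin hT i)) (fun x => w ↑x)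
      (fun i => by simp [← Finset.coe_orderIsoOfFin_apply])).symm
  rw [hsumT, show (univ.filter (· ≤ k) : Finset (Fin n)) =
      (univ : Finset (Fin (k.val + 1))).map (Fin.castLEEmb k.isLt) from ?_, Finset.sum_map]
  · refine Finset.sum_le_sum fun i _ => hw _ _ ?_
    rw [Fin.le_def]
    exact strictMono_le_apply _ (T.orderEmbOfFin hT).strictMono i
  · ext i
    simp only [mem_filter, mem_univ, true_and, mem_map]
    constructor
    · intro h
      exact ⟨⟨i.val, by omega⟩, by ext; simp⟩
    · rintro ⟨j, -, rfl⟩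
      simpa [Fin.le_def, Fin.castLEEmb] using Nat.lt_succ_iff.mp j.isLt

variable {n : ℕ}

private def permMat (π : Equiv.Perm (Fin n)) : Matrix (Fin n) (Fin n) ℝ :=
  fun i j => if j = π i then 1 else 0

private lemma permMat_mem (π : Equiv.Perm (Fin n)) :
    permMat π ∈ doublyStochastic ℝ (Fin n) := by
  rw [mem_doublyStochastic_iff_sum]
  refine ⟨fun i j => by unfold permMat; split <;> norm_num, fun i => by simp [permMat], fun j => ?_⟩
  rw [Finset.sum_eq_single (π.symm j)]
  · simp [permMat]
  · intro b _ hb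
    simp only [permMat, ite_eq_right_iff]
    intro h
    exact absurd (by rw [h]; exact (Equiv.symm_apply_apply _ _).symm ▸ (π.symm_apply_apply b)) hb
  · simp

private lemma permMat_mulVec (π : Equiv.Perm (Fin n)) (v : Fin n → ℝ) (i : Fin n) :
    (permMat π *ᵥ v) i = v (π i) := by
  simp [permMat, mulVec, dotProduct]

private def mixMat (lam : ℝ) (π : Equiv.Perm (Fin n)) : Matrix (Fin n) (Fin n) ℝ :=
  fun i j => lam * (if j = i then 1 else 0) + (1 - lam) * (if j = π i then 1 else 0)

private lemma mixMat_mem (lam : ℝ) (h0 : 0 ≤ lam) (h1 : lam ≤ 1) (π : Equiv.Perm (Fin n)) :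
    mixMat lam π ∈ doublyStochastic ℝ (Fin n) := by
  have : mixMat lam π = lam • (permMat (Equiv.refl _)) + (1 - lam) • permMat π := by
    ext i j
    simp [mixMat, permMat]
    by_cases h : j = i <;> simp [h]
  rw [this]
  exact convex_doublyStochastic (permMat_mem _) (permMat_mem _) h0 (by linarith) (by ring)

private lemma mixMat_mulVec (lam : ℝ) (π : Equiv.Perm (Fin n)) (v : Fin n → ℝ) (i : Fin n) :
    (mixMat lam π *ᵥ v) i = lam * v i + (1 - lam) * v (π i) := by
  simp [mixMat, mulVec, dotProduct, add_mul, Finset.sum_add_distrib, mul_assoc,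
    ← Finset.mul_sum]

private def blockMat {m : ℕ} (R : Matrix (Fin m) (Fin m) ℝ) :
    Matrix (Fin (m + 1)) (Fin (m + 1)) ℝ :=
  fun i j => Fin.cases (Fin.cases 1 (fun _ => 0) j)
    (fun i' => Fin.cases 0 (fun j' => R i' j') j) i

private lemma blockMat_mem {m : ℕ} (R : Matrix (Fin m) (Fin m) ℝ)
    (hR : R ∈ doublyStochastic ℝ (Fin m)) :
    blockMat R ∈ doublyStochastic ℝ (Fin (m + 1)) := by
  rw [mem_doublyStochastic_iff_sum] at hR ⊢
  obtain ⟨h0, hrow, hcol⟩ := hR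
  refine ⟨fun i j => ?_, fun i => ?_, fun j => ?_⟩
  · induction i using Fin.cases <;> induction j using Fin.cases <;>
      simp [blockMat] <;> first | norm_num | exact h0 _ _ | skip
    exact h0 _ _
  · induction i using Fin.cases <;> simp [blockMat, Fin.sum_univ_succ, hrow]
  · induction j using Fin.cases <;> simp [blockMat, Fin.sum_univ_succ, hcol]

private lemma blockMat_mulVec_zero {m : ℕ} (R : Matrix (Fin m) (Fin m) ℝ)
    (v : Fin (m + 1) → ℝ) : (blockMat R *ᵥ v) 0 = v 0 := by
  simp [blockMat, mulVec, dotProduct, Fin.sum_univ_succ]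

private lemma blockMat_mulVec_succ {m : ℕ} (R : Matrix (Fin m) (Fin m) ℝ)
    (v : Fin (m + 1) → ℝ) (i : Fin m) :
    (blockMat R *ᵥ v) i.succ = (R *ᵥ (fun j => v j.succ)) i := by
  simp [blockMat, mulVec, dotProduct, Fin.sum_univ_succ]

private theorem key : ∀ (n : ℕ) (x y : Fin n → ℝ),
    (∀ i, 0 ≤ x i) → (∀ i, 0 ≤ y i) →
    (∀ i j : Fin n, i ≤ j → x j ≤ x i) →
    (∀ i j : Fin n, i ≤ j → y j ≤ y i) →
    (∀ k : Fin n, ∑ i ∈ univ.filter (· ≤ k), y i < ∑ i ∈ univ.filter (· ≤ k), x i) →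
    ∃ P : Matrix (Fin n) (Fin n) ℝ,
      (∀ i j, 0 ≤ P i j) ∧ (∀ i, ∑ j, P i j = 1) ∧ (∀ j, ∑ i, P i j = 1) ∧
        ∀ i, y i < (P.mulVec x) i := by
  intro n
  induction n with
  | zero =>
    intro x y _ _ _ _ _
    exact ⟨1, fun i => i.elim0, fun i => i.elim0, fun j => j.elim0, fun i => i.elim0⟩
  | succ m ih =>
    intro x y hx0 hy0 hxsort hysort hdom
    have hdom' : ∀ k, pre y k < pre x k := hdom
    by_cases hbig : ∀ i, y 0 < x i
    · refine ⟨1, fun i j => ?_, fun i => ?_, fun j => ?_, fun i => ?_⟩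
      · rw [Matrix.one_apply]; split <;> norm_num
      · simp [Matrix.one_apply]
      · simp [Matrix.one_apply]
      · rw [Matrix.one_mulVec]
        exact lt_of_le_of_lt (hysort 0 i (Fin.zero_le i)) (hbig i)
    · push_neg at hbig
      obtain ⟨j0, hj0⟩ := hbig
      have hFne : (univ.filter (fun i => x i ≤ y 0) : Finset (Fin (m+1))).Nonempty :=
        ⟨j0, by simp [hj0]⟩
      set jn := Finset.min' _ hFne with hjndef
      have hjn : x jn ≤ y 0 := by
        have := Finset.min'_mem _ hFne
        simpa using this
      have hleast : ∀ l : Fin (m+1), l < jn → y 0 < x l := by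
        intro l hl
        by_contra hcon
        push_neg at hcon
        exact absurd (Finset.min'_le _ l (by simp [hcon])) (not_le.mpr hl)
      have hx00 : y 0 < x 0 := by
        have := hdom' 0
        rwa [pre_zero, pre_zero] at this
      -- the slack δ
      obtain ⟨δ, hδpos, h2δ⟩ : ∃ δ : ℝ, 0 < δ ∧ ∀ k, pre y k + 2*δ ≤ pre x k := by
        refine ⟨(univ.inf' univ_nonempty (fun k => pre x k - pre y k)) / 2, ?_, ?_⟩
        · have : (0:ℝ) < univ.inf' univ_nonempty (fun k => pre x k - pre y k) := by
            rw [Finset.lt_inf'_iff]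
            intro k _
            have := hdom' k; linarith
          linarith
        · intro k
          have := Finset.inf'_le (fun k => pre x k - pre y k) (mem_univ k)
          linarith
      set c := min (x 0) (y 0 + δ) with hcdef
      have hc2 : c ≤ x 0 := min_le_left _ _
      have hc3 : c ≤ y 0 + δ := min_le_right _ _
      have hc1 : y 0 < c := lt_min hx00 (by linarith)
      have hjc : x jn < c := lt_of_le_of_lt hjn hc1
      have hden : (0:ℝ) < x 0 - x jn := by linarith
      set lam := (c - x jn) / (x 0 - x jn) with hlamdef
      have hlam0 : 0 ≤ lam := le_of_lt (div_pos (by linarith) hden)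
      have hlam1 : lam ≤ 1 := by rw [div_le_one hden]; linarith
      set sw : Equiv.Perm (Fin (m+1)) := Equiv.swap 0 jn with hswdef
      have hT : mixMat lam sw ∈ doublyStochastic ℝ (Fin (m+1)) := mixMat_mem _ hlam0 hlam1 _
      set x' := mixMat lam sw *ᵥ x with hx'def
      have hx'eval : ∀ i, x' i = lam * x i + (1 - lam) * x (sw i) := fun i => mixMat_mulVec _ _ _ _
      have hlamc : lam * (x 0 - x jn) = c - x jn := div_mul_cancel₀ _ (ne_of_gt hden)
      have hx'0 : x' 0 = c := by
        rw [hx'eval, show sw 0 = jn from Equiv.swap_apply_left _ _]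
        linear_combination hlamc
      have hx'nonneg : ∀ i, 0 ≤ x' i := by
        intro i
        rw [hx'eval]
        exact add_nonneg (mul_nonneg hlam0 (hx0 _)) (mul_nonneg (by linarith) (hx0 _))
      have hx'other : ∀ l : Fin (m+1), l ≠ 0 → l ≠ jn → x' l = x l := by
        intro l h1 h2
        rw [hx'eval, Equiv.swap_apply_of_ne_of_ne h1 h2]
        ring
      set u : Fin m → ℝ := fun i => x' i.succ with hudef
      set y' : Fin m → ℝ := fun i => y i.succ with hy'def
      set π : Equiv.Perm (Fin m) := Fin.revPerm.trans (Tuple.sort u) with hπdef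
      set w : Fin m → ℝ := fun i => u (π i) with hwdef
      have hw_anti : ∀ i j : Fin m, i ≤ j → w j ≤ w i := by
        intro i j hij
        have hmono := Tuple.monotone_sort u
        have hrev : Fin.rev j ≤ Fin.rev i := by rwa [Fin.rev_le_rev]
        exact hmono hrev
      have hw0 : ∀ i, 0 ≤ w i := fun i => hx'nonneg _
      have hy'0 : ∀ i, 0 ≤ y' i := fun i => hy0 _
      have hy'sort : ∀ i j : Fin m, i ≤ j → y' j ≤ y' i := fun i j hij =>
        hysort _ _ (by rwa [Fin.succ_le_succ_iff])
      have hpre_u : ∀ k : Fin m, pre u k = pre x' k.succ - x' 0 := by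
        intro k; rw [pre_succ]; ring
      have hpre_y' : ∀ k : Fin m, pre y' k = pre y k.succ - y 0 := by
        intro k; rw [pre_succ]; ring
      have hdomw : ∀ k : Fin m, pre y' k < pre w k := by
        intro k
        have hstep1 : pre u k ≤ pre w k := by
          have himg : ∑ i ∈ (univ.filter (· ≤ k)).image π.symm, w i = pre u k := by
            rw [Finset.sum_image (fun a _ b _ h => π.symm.injective h)]
            refine Finset.sum_congr rfl fun i _ => ?_
            show u (π (π.symm i)) = u i
            rw [Equiv.apply_symm_apply]
          rw [← himg]
          exact sum_subset_le_pre w hw_anti _ k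
            (by rw [Finset.card_image_of_injective _ π.symm.injective, card_prefilter])
        have hstep2 : pre y' k < pre u k := by
          rcases le_or_gt jn k.succ with hA | hB
          · -- jn inside the window
            have hmemW : ∀ l : Fin (m+1), l ≤ k.succ → sw l ≤ k.succ := by
              intro l hl
              rcases eq_or_ne l 0 with rfl | h0
              · rwa [show sw 0 = jn from Equiv.swap_apply_left _ _]
              rcases eq_or_ne l jn with rfl | hj
              · rw [show sw jn = 0 from Equiv.swap_apply_right _ _]
                exact Fin.zero_le _
              · rwa [Equiv.swap_apply_of_ne_of_ne h0 hj]
            have e2 : ∑ i ∈ univ.filter (· ≤ k.succ), x (sw i)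
                = ∑ i ∈ univ.filter (· ≤ k.succ), x i := by
              refine Finset.sum_nbij' (fun i => sw i) (fun i => sw i) ?_ ?_ ?_ ?_ ?_
              · intro a ha
                simp only [mem_filter, mem_univ, true_and] at ha ⊢
                exact hmemW a ha
              · intro a ha
                simp only [mem_filter, mem_univ, true_and] at ha ⊢
                exact hmemW a ha
              · intro a _; exact Equiv.swap_apply_self _ _ _
              · intro a _; exact Equiv.swap_apply_self _ _ _
              · intro a _; rfl
            have e1 : pre x' k.succ = pre x k.succ := by
              show ∑ i ∈ univ.filter (· ≤ k.succ), x' i = _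
              calc ∑ i ∈ univ.filter (· ≤ k.succ), x' i
                  = ∑ i ∈ univ.filter (· ≤ k.succ), (lam * x i + (1 - lam) * x (sw i)) :=
                    Finset.sum_congr rfl fun i _ => hx'eval i
                _ = lam * ∑ i ∈ univ.filter (· ≤ k.succ), x i
                    + (1 - lam) * ∑ i ∈ univ.filter (· ≤ k.succ), x (sw i) := by
                    rw [Finset.sum_add_distrib, Finset.mul_sum, Finset.mul_sum]
                _ = pre x k.succ := by rw [e2]; show _ = ∑ i ∈ univ.filter (· ≤ k.succ), x i; ring
            have hd := h2δ k.succ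
            rw [hpre_y', hpre_u, e1, hx'0]
            linarith
          · -- window entirely before jn
            show ∑ i ∈ univ.filter (· ≤ k), y' i < ∑ i ∈ univ.filter (· ≤ k), u i
            refine Finset.sum_lt_sum_of_nonempty ⟨k, by simp⟩ ?_
            intro i hi
            simp only [mem_filter, mem_univ, true_and] at hi
            have h1 : i.succ ≤ k.succ := by rwa [Fin.succ_le_succ_iff]
            have h2 : i.succ < jn := lt_of_le_of_lt h1 hB
            have hui : u i = x i.succ := hx'other _ (Fin.succ_ne_zero i) (ne_of_lt h2)
            rw [hui]
            exact lt_of_le_of_lt (hysort 0 i.succ (Fin.zero_le _)) (hleast _ h2)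
        linarith
      obtain ⟨Q, hQ0, hQrow, hQcol, hQw⟩ := ih w y' hw0 hy'0 hw_anti hy'sort hdomw
      have hQmem : Q ∈ doublyStochastic ℝ (Fin m) :=
        mem_doublyStochastic_iff_sum.mpr ⟨hQ0, hQrow, hQcol⟩
      have hRmem : Q * permMat π ∈ doublyStochastic ℝ (Fin m) :=
        mul_mem hQmem (permMat_mem π)
      have hPmem : blockMat (Q * permMat π) * mixMat lam sw ∈ doublyStochastic ℝ (Fin (m+1)) :=
        mul_mem (blockMat_mem _ hRmem) hT
      rw [mem_doublyStochastic_iff_sum] at hPmem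
      refine ⟨_, hPmem.1, hPmem.2.1, hPmem.2.2, ?_⟩
      have hPx : (blockMat (Q * permMat π) * mixMat lam sw) *ᵥ x
          = blockMat (Q * permMat π) *ᵥ x' := by
        rw [hx'def, Matrix.mulVec_mulVec]
      intro i
      rw [hPx]
      induction i using Fin.cases with
      | zero =>
        rw [blockMat_mulVec_zero, hx'0]
        exact hc1
      | succ i =>
        rw [blockMat_mulVec_succ]
        have hperm : permMat π *ᵥ u = w := funext fun l => permMat_mulVec _ _ _
        have : (Q * permMat π) *ᵥ u = Q *ᵥ w := by
          rw [← Matrix.mulVec_mulVec, hperm]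
        show y i.succ < ((Q * permMat π) *ᵥ (fun l => x' l.succ)) i
        have hfun : (fun l : Fin m => x' l.succ) = u := rfl
        rw [hfun, this]
        exact hQw i

theorem stmt_4 (n : ℕ) (x y : Fin n → ℝ)
    (hx0 : ∀ i, 0 ≤ x i) (hy0 : ∀ i, 0 ≤ y i)
    (hxsort : ∀ i j : Fin n, i ≤ j → x j ≤ x i)
    (hysort : ∀ i j : Fin n, i ≤ j → y j ≤ y i)
    (hdom : ∀ k : Fin n, ∑ i ∈ univ.filter (· ≤ k), y i < ∑ i ∈ univ.filter (· ≤ k), x i) :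
    ∃ P : Matrix (Fin n) (Fin n) ℝ,
      (∀ i j, 0 ≤ P i j) ∧ (∀ i, ∑ j, P i j = 1) ∧ (∀ j, ∑ i, P i j = 1) ∧
        ∀ i, y i < (P.mulVec x) i := by
  exact key n x y hx0 hy0 hxsort hysort hdom
end

section
/- Let X₁, …, Xₙ be independent random variables and Z_k = X₁ + ⋯ + X_k. Then for any x ≥ 0, P(max_{1≤k≤n} |Z_k| ≥ 3x) ≤ 3 · max_{1≤k≤n} P(|Z_k| ≥ x). -/
open MeasureTheory Finset

theorem stmt_9 (Ω : Type) (_ : MeasurableSpace Ω) (μ : Measure Ω)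
    [IsProbabilityMeasure μ] (n : ℕ) (X : ℕ → Ω → ℝ)
    (hmeas : ∀ i, Measurable (X i))
    (hindep : ProbabilityTheory.iIndepFun X μ)
    (x : ℝ) (hx : 0 ≤ x) :
    μ {ω | ∃ k ∈ Icc 1 n, 3 * x ≤ |∑ i ∈ range k, X i ω|} ≤
      3 * (Icc 1 n).sup (fun k => μ {ω | x ≤ |∑ i ∈ range k, X i ω|}) := by
  classical
  rcases Nat.eq_zero_or_pos n with hn | hn
  · subst hn
    simp
  -- Notation
  set Z : ℕ → Ω → ℝ := fun k ω => ∑ i ∈ range k, X i ω with hZdef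
  set M : ENNReal := (Icc 1 n).sup (fun k => μ {ω | x ≤ |Z k ω|}) with hMdef
  have hZmeas : ∀ k, Measurable (Z k) := fun k =>
    Finset.measurable_sum _ fun i _ => hmeas i
  have hMle : ∀ k ∈ Icc 1 n, μ {ω | x ≤ |Z k ω|} ≤ M := fun k hk =>
    Finset.le_sup (f := fun k => μ {ω | x ≤ |Z k ω|}) hk
  -- first-entrance decomposition
  set A : ℕ → Set Ω := fun k =>
    {ω | 3 * x ≤ |Z k ω|} ∩ ⋂ j ∈ Finset.Ico 1 k, {ω | |Z j ω| < 3 * x} with hAdef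
  have hAmem : ∀ k ω, ω ∈ A k ↔
      (3 * x ≤ |Z k ω| ∧ ∀ j, 1 ≤ j → j < k → |Z j ω| < 3 * x) := by
    intro k ω
    simp [hAdef, Set.mem_iInter, Finset.mem_Ico, and_imp]
  have hAmeas : ∀ k, MeasurableSet (A k) := by
    intro k
    refine (measurableSet_le measurable_const (hZmeas k).abs).inter ?_
    exact MeasurableSet.biInter (Set.to_countable _)
      (fun j _ => measurableSet_lt (hZmeas j).abs measurable_const)
  have hAdisj : (↑(Icc 1 n) : Set ℕ).PairwiseDisjoint A := by
    intro k hk l hl hkl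
    have key : ∀ a b : ℕ, a ∈ (↑(Icc 1 n) : Set ℕ) → a < b → Disjoint (A a) (A b) := by
      intro a b ha hab
      rw [Set.disjoint_left]
      intro ω hωa hωb
      have h1 := (hAmem a ω).1 hωa
      have h2 := (hAmem b ω).1 hωb
      simp only [Finset.coe_Icc, Set.mem_Icc] at ha
      exact absurd h1.1 (not_le.2 (h2.2 a ha.1 hab))
    rcases lt_or_gt_of_ne hkl with h | h
    · exact key k l hk h
    · exact (key l k hl h).symm
  have hEeq : {ω | ∃ k ∈ Icc 1 n, 3 * x ≤ |Z k ω|} = ⋃ k ∈ Icc 1 n, A k := by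
    ext ω
    simp only [Set.mem_setOf_eq, Set.mem_iUnion, exists_prop]
    constructor
    · rintro ⟨k, hk, hxk⟩
      have hP : ∃ m, m ∈ Icc 1 n ∧ 3 * x ≤ |Z m ω| := ⟨k, hk, hxk⟩
      refine ⟨Nat.find hP, (Nat.find_spec hP).1, ?_⟩
      rw [hAmem]
      refine ⟨(Nat.find_spec hP).2, fun j hj1 hj2 => ?_⟩
      have hjn : j ∈ Icc 1 n := by
        have := (Finset.mem_Icc.1 (Nat.find_spec hP).1).2
        exact Finset.mem_Icc.2 ⟨hj1, le_trans (le_of_lt hj2) this⟩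
      by_contra hj3
      push_neg at hj3
      exact Nat.find_min hP hj2 ⟨hjn, hj3⟩
    · rintro ⟨k, hk, hωk⟩
      exact ⟨k, hk, ((hAmem k ω).1 hωk).1⟩
  rw [hEeq]
  rw [measure_biUnion_finset hAdisj (fun k _ => hAmeas k)]
  -- The event Sn and the tail sums W
  set Sn : Set Ω := {ω | x ≤ |Z n ω|} with hSndef
  set W : ℕ → Ω → ℝ := fun k ω => ∑ i ∈ Finset.Ico k n, X i ω with hWdef
  set D : ℕ → Set Ω := fun k => {ω | 2 * x ≤ |W k ω|} with hDdef
  -- independence : A k is independent of D k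
  have hindep' : ProbabilityTheory.iIndep
      (fun i => MeasurableSpace.comap (X i) inferInstance) μ :=
    (ProbabilityTheory.iIndepFun_iff_iIndep _ _ _).1 hindep
  have hkey : ∀ k ∈ Icc 1 n, μ (A k ∩ D k) = μ (A k) * μ (D k) := by
    intro k hk
    have hIndep2 := ProbabilityTheory.indep_iSup_of_disjoint
      (fun i => (hmeas i).comap_le) hindep'
      (S := {i | i < k}) (T := {i | k ≤ i})
      (by rw [Set.disjoint_left]; intro i hi hi'; simp at hi hi'; omega)
    set mS := ⨆ i ∈ {i : ℕ | i < k}, MeasurableSpace.comap (X i) inferInstance with hmS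
    have hXS : ∀ i < k, Measurable[mS] (X i) := by
      intro i hi
      have : MeasurableSpace.comap (X i) inferInstance ≤ mS :=
        le_iSup₂ (f := fun i (_ : i ∈ {i : ℕ | i < k}) =>
          MeasurableSpace.comap (X i) inferInstance) i hi
      exact (Measurable.of_comap_le le_rfl).mono this le_rfl
    have hZS : ∀ j ≤ k, Measurable[mS] (Z j) := by
      intro j hj
      exact Finset.measurable_sum _ fun i hi =>
        hXS i (lt_of_lt_of_le (Finset.mem_range.1 hi) hj)
    have hAk : MeasurableSet[mS] (A k) := by
      refine MeasurableSet.inter ?_ ?_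
      · exact (hZS k le_rfl).abs measurableSet_Ici
      · exact MeasurableSet.biInter (Set.to_countable _) fun j hj =>
          (hZS j (le_of_lt (Finset.mem_Ico.1 hj).2)).abs measurableSet_Iio
    set mT := ⨆ i ∈ {i : ℕ | k ≤ i}, MeasurableSpace.comap (X i) inferInstance with hmT
    have hXT : ∀ i, k ≤ i → Measurable[mT] (X i) := by
      intro i hi
      have : MeasurableSpace.comap (X i) inferInstance ≤ mT :=
        le_iSup₂ (f := fun i (_ : i ∈ {i : ℕ | k ≤ i}) =>
          MeasurableSpace.comap (X i) inferInstance) i hi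
      exact (Measurable.of_comap_le le_rfl).mono this le_rfl
    have hWT : Measurable[mT] (W k) :=
      Finset.measurable_sum _ fun i hi => hXT i (Finset.mem_Ico.1 hi).1
    have hDk : MeasurableSet[mT] (D k) :=
      hWT.abs measurableSet_Ici
    exact (hIndep2.indepSet_of_measurableSet hAk hDk).measure_inter_eq_mul
  -- D k has small probability
  have hD_le : ∀ k ∈ Icc 1 n, μ (D k) ≤ M + M := by
    intro k hk
    have hkn : k ≤ n := (Finset.mem_Icc.1 hk).2
    have hsub : D k ⊆ Sn ∪ {ω | x ≤ |Z k ω|} := by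
      intro ω hω
      simp only [hDdef, Set.mem_setOf_eq] at hω
      have hW : W k ω = Z n ω - Z k ω := by
        simp only [hWdef, hZdef]
        exact Finset.sum_Ico_eq_sub _ hkn
      by_contra hc
      simp only [Set.mem_union, hSndef, Set.mem_setOf_eq, not_or, not_le] at hc
      have : |W k ω| < 2 * x := by
        rw [hW]
        calc |Z n ω - Z k ω| ≤ |Z n ω| + |Z k ω| := abs_sub _ _
          _ < x + x := add_lt_add hc.1 hc.2
          _ = 2 * x := by ring
      linarith
    calc μ (D k) ≤ μ (Sn ∪ {ω | x ≤ |Z k ω|}) := measure_mono hsub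
      _ ≤ μ Sn + μ {ω | x ≤ |Z k ω|} := measure_union_le _ _
      _ ≤ M + M := add_le_add (hMle n (Finset.mem_Icc.2 ⟨hn, le_rfl⟩)) (hMle k hk)
  -- each A k splits
  have hsplit : ∀ k ∈ Icc 1 n, μ (A k) ≤ μ (A k ∩ Sn) + μ (A k) * (M + M) := by
    intro k hk
    have hkn : k ≤ n := (Finset.mem_Icc.1 hk).2
    have hsub : A k ⊆ (A k ∩ Sn) ∪ (A k ∩ D k) := by
      intro ω hω
      by_cases hSn : ω ∈ Sn
      · exact Or.inl ⟨hω, hSn⟩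
      · refine Or.inr ⟨hω, ?_⟩
        simp only [hSndef, Set.mem_setOf_eq, not_le] at hSn
        have h1 := ((hAmem k ω).1 hω).1
        have hW : W k ω = Z n ω - Z k ω := by
          simp only [hWdef, hZdef]
          exact Finset.sum_Ico_eq_sub _ hkn
        simp only [hDdef, Set.mem_setOf_eq, hW]
        have : 2 * x ≤ |Z k ω| - |Z n ω| := by
          have := abs_nonneg (Z n ω)
          linarith
        calc 2 * x ≤ |Z k ω| - |Z n ω| := this
          _ ≤ |Z k ω - Z n ω| := abs_sub_abs_le_abs_sub _ _
          _ = |Z n ω - Z k ω| := abs_sub_comm _ _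
    calc μ (A k) ≤ μ ((A k ∩ Sn) ∪ (A k ∩ D k)) := measure_mono hsub
      _ ≤ μ (A k ∩ Sn) + μ (A k ∩ D k) := measure_union_le _ _
      _ = μ (A k ∩ Sn) + μ (A k) * μ (D k) := by rw [hkey k hk]
      _ ≤ μ (A k ∩ Sn) + μ (A k) * (M + M) :=
          add_le_add le_rfl (mul_le_mul_right (hD_le k hk) _)
  -- sum everything up
  have hSnMeas : MeasurableSet Sn :=
    measurableSet_le measurable_const (hZmeas n).abs
  have hsum1 : ∑ k ∈ Icc 1 n, μ (A k ∩ Sn) ≤ M := by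
    have hdisj : (↑(Icc 1 n) : Set ℕ).PairwiseDisjoint (fun k => A k ∩ Sn) :=
      fun k hk l hl hkl => (hAdisj hk hl hkl).mono
        Set.inter_subset_left Set.inter_subset_left
    rw [← measure_biUnion_finset hdisj (fun k _ => (hAmeas k).inter hSnMeas)]
    calc μ (⋃ k ∈ Icc 1 n, A k ∩ Sn) ≤ μ Sn :=
          measure_mono (Set.iUnion₂_subset fun k _ => Set.inter_subset_right)
      _ ≤ M := hMle n (Finset.mem_Icc.2 ⟨hn, le_rfl⟩)
  have hsum2 : ∑ k ∈ Icc 1 n, μ (A k) ≤ 1 := by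
    rw [← measure_biUnion_finset hAdisj (fun k _ => hAmeas k)]
    exact prob_le_one
  calc ∑ k ∈ Icc 1 n, μ (A k)
      ≤ ∑ k ∈ Icc 1 n, (μ (A k ∩ Sn) + μ (A k) * (M + M)) :=
        Finset.sum_le_sum hsplit
    _ = (∑ k ∈ Icc 1 n, μ (A k ∩ Sn)) + (∑ k ∈ Icc 1 n, μ (A k)) * (M + M) := by
        rw [Finset.sum_add_distrib, Finset.sum_mul]
    _ ≤ M + 1 * (M + M) :=
        add_le_add hsum1 (mul_le_mul_left hsum2 _)
    _ = 3 * M := by ring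
end

section
/- Let X₁, …, Xₙ be i.i.d. geometric random variables with parameter λ ∈ (0,1] (so E[Xᵢ] = 1/λ), let Z_j = X₁ + ⋯ + X_j, and let ε ∈ [0,1]. Then P(max_{1≤j≤n} |Z_j − j/λ| > εn/λ) ≤ 6·exp(−ε²n/36). -/
open MeasureTheory Finset Real
open scoped ENNReal NNReal

lemma aux_exp_key (r : ℝ) (hr : |r| ≤ 1/3) : 1 ≤ (1 - r) * Real.exp (r + r ^ 2) := by
  rcases abs_le.mp hr with ⟨hr1, hr2⟩
  rcases le_or_gt 0 r with h | h
  · have h3 := Real.quadratic_le_exp_of_nonneg (x := r + r ^ 2) (by positivity)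
    nlinarith [h3, sq_nonneg r, sq_nonneg (r + r^2), mul_nonneg h (sq_nonneg r)]
  · have h3 := Real.add_one_le_exp (r + r ^ 2)
    nlinarith [h3, sq_nonneg r]

lemma aux_mgf_bound (lam s : ℝ) (h0 : 0 < lam) (h1 : lam ≤ 1) (hs : |s| ≤ lam / 3) :
    0 < 1 - (1 - lam) * Real.exp s ∧
    lam * Real.exp s / (1 - (1 - lam) * Real.exp s) ≤ Real.exp (s / lam + (s / lam) ^ 2) := by
  obtain ⟨hsl, hsr⟩ := abs_le.mp hs
  have hs1 : s < 1 := by linarith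
  have hlspos : 0 < lam - s := by linarith
  have h1s : 0 < 1 - s := by linarith
  have hep := Real.exp_pos s
  have hexp1 : Real.exp s * (1 - s) ≤ 1 := by
    have h := Real.add_one_le_exp (-s)
    have h2 : Real.exp s * Real.exp (-s) = 1 := by
      rw [← Real.exp_add]; simp
    nlinarith [mul_le_mul_of_nonneg_left h hep.le]

  have hden : (lam - s) / (1 - s) ≤ 1 - (1 - lam) * Real.exp s := by
    have hq : (1 - lam) * Real.exp s ≤ (1 - lam) / (1 - s) := by
      rw [le_div_iff₀ h1s]
      nlinarith [hexp1]
    have heq : (lam - s) / (1 - s) = 1 - (1 - lam) / (1 - s) := by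
      field_simp; ring
    linarith
  have hdpos : 0 < 1 - (1 - lam) * Real.exp s :=
    lt_of_lt_of_le (div_pos hlspos h1s) hden
  refine ⟨hdpos, ?_⟩
  have hnum : lam * Real.exp s ≤ lam / (1 - s) := by
    rw [le_div_iff₀ h1s]
    nlinarith [hexp1]
  have hratio : lam * Real.exp s / (1 - (1 - lam) * Real.exp s) ≤ lam / (lam - s) := by
    have h2 : lam * Real.exp s / (1 - (1 - lam) * Real.exp s) ≤
        (lam / (1 - s)) / ((lam - s) / (1 - s)) :=
      div_le_div₀ (by positivity) hnum (div_pos hlspos h1s) hden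
    have h3 : (lam / (1 - s)) / ((lam - s) / (1 - s)) = lam / (lam - s) := by
      field_simp
    linarith [h2, h3.le]
  refine hratio.trans ?_
  have hr : |s / lam| ≤ 1 / 3 := by
    rw [abs_div, abs_of_pos h0, div_le_div_iff₀ (by positivity) (by norm_num)]
    linarith [abs_le.mpr ⟨hsl, hsr⟩]
  have hkey := aux_exp_key (s / lam) hr
  have hEpos := Real.exp_pos (s / lam + (s / lam) ^ 2)
  rw [div_le_iff₀ hlspos]
  have hls : lam - s = lam * (1 - s / lam) := by field_simp
  nlinarith [mul_le_mul_of_nonneg_left hkey h0.le]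

lemma aux_geom_tsum (a ρ : ℝ) (ha : 0 ≤ a) (h0 : 0 ≤ ρ) (h1 : ρ < 1) :
    ∑' j : ℕ, ENNReal.ofReal (a * ρ ^ j) = ENNReal.ofReal (a / (1 - ρ)) := by
  have h1ρ : (0:ℝ) < 1 - ρ := by linarith
  simp_rw [ENNReal.ofReal_mul ha, ENNReal.ofReal_pow h0, ENNReal.tsum_mul_left,
    ENNReal.tsum_geometric]
  rw [div_eq_mul_inv, ENNReal.ofReal_mul ha]
  congr 1
  rw [ENNReal.ofReal_inv_of_pos h1ρ]
  congr 1
  rw [ENNReal.ofReal_sub _ h0, ENNReal.ofReal_one]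

lemma aux_dist {Ω : Type} [MeasurableSpace Ω] (μ : Measure Ω) [IsProbabilityMeasure μ]
    (lam : ℝ) (h0 : 0 < lam) (h1 : lam ≤ 1) (X : Ω → ℕ) (hX : Measurable X)
    (hpmf : ∀ j : ℕ, 1 ≤ j → μ {ω | X ω = j} = ENNReal.ofReal (lam * (1 - lam) ^ (j - 1))) :
    μ {ω | X ω = 0} = 0 := by
  have hdisj : Pairwise (Function.onFun Disjoint fun j : ℕ => {ω | X ω = j}) := by
    intro i j hij
    simp only [Function.onFun, Set.disjoint_left]
    rintro ω (hi : X ω = i) (hj : X ω = j)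
    exact hij (hi ▸ hj ▸ rfl)
  have hmeas : ∀ j : ℕ, MeasurableSet {ω | X ω = j} := by
    intro j
    have h : {ω | X ω = j} = X ⁻¹' {j} := by ext ω; simp
    rw [h]; exact hX (measurableSet_singleton j)
  have huniv : (⋃ j : ℕ, {ω | X ω = j}) = Set.univ := by
    ext ω; simp
  have hsum : ∑' j : ℕ, μ {ω | X ω = j} = 1 := by
    rw [← measure_iUnion hdisj hmeas, huniv, measure_univ]
  have htail : ∑' j : ℕ, μ {ω | X ω = j + 1} = 1 := by
    have : ∀ j : ℕ, μ {ω | X ω = j + 1} = ENNReal.ofReal (lam * (1 - lam) ^ j) := by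
      intro j
      rw [hpmf (j + 1) (by omega)]
      norm_num
    simp_rw [this]
    rw [aux_geom_tsum lam (1 - lam) h0.le (by linarith) (by linarith)]
    rw [show lam / (1 - (1 - lam)) = 1 by rw [sub_sub_cancel, div_self h0.ne']]
    exact ENNReal.ofReal_one
  rw [tsum_eq_zero_add' ENNReal.summable, htail] at hsum
  have h2 : μ {ω | X ω = 0} + 1 = 0 + 1 := by rw [hsum, zero_add]
  exact (ENNReal.add_left_inj ENNReal.one_ne_top).mp h2

lemma aux_mgf_eq {Ω : Type} [MeasurableSpace Ω] (μ : Measure Ω) [IsProbabilityMeasure μ]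
    (lam : ℝ) (h0 : 0 < lam) (h1 : lam ≤ 1) (X : Ω → ℕ) (hX : Measurable X)
    (hpmf : ∀ j : ℕ, 1 ≤ j → μ {ω | X ω = j} = ENNReal.ofReal (lam * (1 - lam) ^ (j - 1)))
    (t : ℝ) (hd : 0 < 1 - (1 - lam) * Real.exp t) :
    Integrable (fun ω => Real.exp (t * (X ω : ℝ))) μ ∧
    ∫ ω, Real.exp (t * (X ω : ℝ)) ∂μ = lam * Real.exp t / (1 - (1 - lam) * Real.exp t) := by
  have hzero := aux_dist μ lam h0 h1 X hX hpmf
  have hρ0 : 0 ≤ (1 - lam) * Real.exp t := mul_nonneg (by linarith) (Real.exp_pos t).le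
  have hρ1 : (1 - lam) * Real.exp t < 1 := by linarith
  have hmeasY : Measurable (fun ω => Real.exp (t * (X ω : ℝ))) :=
    Real.measurable_exp.comp ((measurable_from_nat.comp hX).const_mul t)
  have hlin : ∫⁻ ω, ENNReal.ofReal (Real.exp (t * (X ω : ℝ))) ∂μ
      = ENNReal.ofReal (lam * Real.exp t / (1 - (1 - lam) * Real.exp t)) := by
    have hg : Measurable (fun j : ℕ => ENNReal.ofReal (Real.exp (t * (j : ℝ)))) :=
      measurable_from_nat
    calc ∫⁻ ω, ENNReal.ofReal (Real.exp (t * (X ω : ℝ))) ∂μ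
        = ∫⁻ j, ENNReal.ofReal (Real.exp (t * (j : ℝ))) ∂(μ.map X) := (lintegral_map hg hX).symm
      _ = ∑' j : ℕ, ENNReal.ofReal (Real.exp (t * (j : ℝ))) * (μ.map X) {j} :=
          lintegral_countable' _
      _ = ∑' j : ℕ, ENNReal.ofReal (Real.exp (t * (j : ℝ))) * μ {ω | X ω = j} := by
          refine tsum_congr fun j => ?_
          rw [Measure.map_apply hX (measurableSet_singleton j)]
          congr 1
      _ = ENNReal.ofReal (Real.exp (t * ((0 : ℕ) : ℝ))) * μ {ω | X ω = 0}
          + ∑' j : ℕ, ENNReal.ofReal (Real.exp (t * ((j + 1 : ℕ) : ℝ))) * μ {ω | X ω = j + 1} :=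
          tsum_eq_zero_add' ENNReal.summable
      _ = ∑' j : ℕ, ENNReal.ofReal ((lam * Real.exp t) * (((1 - lam) * Real.exp t)) ^ j) := by
          rw [hzero, mul_zero, zero_add]
          refine tsum_congr fun j => ?_
          rw [hpmf (j + 1) (by omega), ← ENNReal.ofReal_mul (by positivity)]
          congr 1
          have hj : ((j + 1 : ℕ) : ℝ) = (j : ℝ) + 1 := by push_cast; ring
          rw [hj, Nat.add_sub_cancel]
          rw [mul_pow, show t * ((j : ℝ) + 1) = t * j + t by ring, Real.exp_add,
            ← Real.exp_nat_mul, mul_comm (t : ℝ) (j : ℝ)]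
          ring_nf
      _ = ENNReal.ofReal (lam * Real.exp t / (1 - (1 - lam) * Real.exp t)) :=
          aux_geom_tsum _ _ (by positivity) hρ0 hρ1
  have hint : Integrable (fun ω => Real.exp (t * (X ω : ℝ))) μ := by
    refine ⟨hmeasY.aestronglyMeasurable, ?_⟩
    rw [hasFiniteIntegral_iff_ofReal (ae_of_all _ fun ω => (Real.exp_pos _).le), hlin]
    exact ENNReal.ofReal_lt_top
  refine ⟨hint, ?_⟩
  rw [integral_eq_lintegral_of_nonneg_ae (ae_of_all _ fun ω => (Real.exp_pos _).le)
    hmeasY.aestronglyMeasurable, hlin, ENNReal.toReal_ofReal]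
  exact div_nonneg (mul_nonneg h0.le (Real.exp_pos t).le) hd.le

lemma aux_tail {Ω : Type} [m0 : MeasurableSpace Ω] (μ : Measure Ω) [IsProbabilityMeasure μ]
    (n : ℕ) (hn : 1 ≤ n) (lam : ℝ) (h0 : 0 < lam) (h1 : lam ≤ 1)
    (X : ℕ → Ω → ℕ) (hmeas : ∀ i, Measurable (X i))
    (hindep : ProbabilityTheory.iIndepFun X μ)
    (hgeom : ∀ i, ∀ j : ℕ, 1 ≤ j →
      μ {ω | X i ω = j} = ENNReal.ofReal (lam * (1 - lam) ^ (j - 1)))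
    (t : ℝ) (ht : |t| ≤ lam / 3) (a : ℝ)
    (hmgfb : ∀ i : ℕ, Integrable (fun ω => Real.exp (t * (X i ω : ℝ))) μ ∧
      ∫ ω, Real.exp (t * (X i ω : ℝ)) ∂μ = lam * Real.exp t / (1 - (1 - lam) * Real.exp t))
    (hd : 0 < 1 - (1 - lam) * Real.exp t)
    (hEb : lam * Real.exp t / (1 - (1 - lam) * Real.exp t) ≤
      Real.exp (t / lam + (t / lam) ^ 2)) :
    μ {ω | ∃ j ∈ Icc 1 n, a ≤ t * ((∑ i ∈ range j, (X i ω : ℝ)) - j / lam)} ≤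
      ENNReal.ofReal (Real.exp (-a + n * (t / lam) ^ 2)) := by
  classical
  set Y : ℕ → Ω → ℝ := fun i ω => ((X i ω : ℝ)) with hYdef
  have hY : ∀ i, Measurable (Y i) := fun i => measurable_from_nat.comp (hmeas i)
  have hYsm : ∀ i, StronglyMeasurable (Y i) := fun i => (hY i).stronglyMeasurable
  have hYindep : ProbabilityTheory.iIndepFun Y μ :=
    hindep.comp (fun _ => (Nat.cast : ℕ → ℝ)) fun _ => measurable_from_nat
  set E : ℝ := lam * Real.exp t / (1 - (1 - lam) * Real.exp t) with hEdef
  have hEpos : 0 < E := div_pos (mul_pos h0 (Real.exp_pos t)) hd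
  have hInt : ∀ i, Integrable (fun ω => Real.exp (t * Y i ω)) μ := fun i => (hmgfb i).1
  have hval : ∀ i, ∫ ω, Real.exp (t * Y i ω) ∂μ = E := fun i => (hmgfb i).2
  have hmgf : ∀ i, ProbabilityTheory.mgf (Y i) μ t = E := fun i => hval i
  set ℱ := MeasureTheory.Filtration.natural Y hYsm with hFdef
  set M : ℕ → Ω → ℝ :=
    fun k ω => Real.exp (t * (∑ i ∈ range (k + 1), Y i) ω) / E ^ (k + 1) with hMdef
  have hMapp : ∀ k ω, M k ω = Real.exp (t * ∑ i ∈ range (k + 1), Y i ω) / E ^ (k + 1) := by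
    intro k ω; simp only [hMdef, Finset.sum_apply]
  have hMnn : ∀ k ω, 0 ≤ M k ω := fun k ω =>
    le_of_lt (div_pos (Real.exp_pos _) (pow_pos hEpos _))
  have hMint : ∀ k, Integrable (M k) μ := fun k =>
    (hYindep.integrable_exp_mul_sum hY fun i _ => hInt i).div_const _
  have hintM : ∀ k, ∫ ω, M k ω ∂μ = 1 := by
    intro k
    have h1' : ∫ ω, Real.exp (t * (∑ i ∈ range (k + 1), Y i) ω) ∂μ = E ^ (k + 1) := by
      have h2 := hYindep.mgf_sum hY (range (k + 1)) (t := t)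
      have h3 : ∏ i ∈ range (k + 1), ProbabilityTheory.mgf (Y i) μ t = E ^ (k + 1) := by
        rw [Finset.prod_congr rfl fun i _ => hmgf i, Finset.prod_const, Finset.card_range]
      calc ∫ ω, Real.exp (t * (∑ i ∈ range (k + 1), Y i) ω) ∂μ
          = ProbabilityTheory.mgf (∑ i ∈ range (k + 1), Y i) μ t := rfl
        _ = E ^ (k + 1) := by rw [h2, h3]
    rw [hMdef]
    simp only
    rw [integral_div, h1', div_self (pow_ne_zero _ hEpos.ne')]
  have hadp : StronglyAdapted ℱ M := by
    intro k
    have hYm : ∀ i ∈ range (k + 1), Measurable[ℱ k] (Y i) := by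
      intro i hi
      have hik : i ≤ k := by rw [Finset.mem_range] at hi; omega
      have hle : MeasurableSpace.comap (Y i) inferInstance ≤ ℱ k := by
        rw [hFdef]
        exact le_iSup₂ (f := fun j (_ : j ≤ k) => MeasurableSpace.comap (Y j) inferInstance) i hik
      exact (comap_measurable (Y i)).mono hle le_rfl
    have hMk : M k = fun ω => Real.exp (t * ∑ i ∈ range (k + 1), Y i ω) / E ^ (k + 1) :=
      funext fun ω => hMapp k ω
    have : Measurable[ℱ k] (M k) := by
      rw [hMk]
      exact (((Finset.measurable_sum (range (k + 1)) hYm).const_mul t).exp).div_const _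
    exact this.stronglyMeasurable
  have hmart : Martingale M ℱ μ := by
    refine martingale_nat hadp hMint fun k => ?_
    have hsplit : M (k + 1) = M k * fun ω => Real.exp (t * Y (k + 1) ω) / E := by
      funext ω
      rw [Pi.mul_apply, hMapp, hMapp, Finset.sum_range_succ, mul_add, Real.exp_add, pow_succ]
      field_simp
    have hg : Integrable (fun ω => Real.exp (t * Y (k + 1) ω) / E) μ := (hInt (k + 1)).div_const E
    have hcond : μ[(M k * fun ω => Real.exp (t * Y (k + 1) ω) / E)|ℱ k]
        =ᵐ[μ] M k * μ[(fun ω => Real.exp (t * Y (k + 1) ω) / E)|ℱ k] :=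
      condExp_mul_of_stronglyMeasurable_left (hadp k) (by rw [← hsplit]; exact hMint (k + 1)) hg
    have hindp : ProbabilityTheory.Indep
        (MeasurableSpace.comap (Y (k + 1)) inferInstance) (ℱ k) μ :=
      ProbabilityTheory.iIndepFun.indep_comap_natural_of_lt hYsm hYindep (Nat.lt_succ_self k)
    have hgm : StronglyMeasurable[MeasurableSpace.comap (Y (k + 1)) inferInstance]
        (fun ω => Real.exp (t * Y (k + 1) ω) / E) :=
      ((((comap_measurable (Y (k + 1))).const_mul t).exp).div_const E).stronglyMeasurable
    have hgc := MeasureTheory.condExp_indep_eq (hY (k + 1)).comap_le (ℱ.le k) hgm hindp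
    have hgval : ∫ ω, Real.exp (t * Y (k + 1) ω) / E ∂μ = 1 := by
      rw [integral_div, hval (k + 1), div_self hEpos.ne']
    have h5 : μ[M (k + 1)|ℱ k] =ᵐ[μ] M k * μ[(fun ω => Real.exp (t * Y (k + 1) ω) / E)|ℱ k] := by
      rw [hsplit]; exact hcond
    filter_upwards [h5, hgc] with ω hω1 hω2
    rw [hω1, Pi.mul_apply, hω2, hgval, mul_one]
  have hnonneg : 0 ≤ M := fun k ω => hMnn k ω
  set ε' : NNReal := Real.toNNReal (Real.exp (a - n * (t / lam) ^ 2)) with hedef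
  have hcoe : (ε' : ℝ) = Real.exp (a - n * (t / lam) ^ 2) :=
    Real.coe_toNNReal _ (Real.exp_pos _).le
  have hmax := MeasureTheory.maximal_ineq hmart.submartingale hnonneg (ε := ε') (n - 1)
  have hsubset : {ω | ∃ j ∈ Icc 1 n, a ≤ t * ((∑ i ∈ range j, (X i ω : ℝ)) - j / lam)} ⊆
      {ω | (ε' : ℝ) ≤ (range (n - 1 + 1)).sup' nonempty_range_add_one fun k => M k ω} := by
    rintro ω ⟨j, hj, hja⟩
    rw [Finset.mem_Icc] at hj
    obtain ⟨hj1, hjn⟩ := hj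
    have hk : j - 1 ∈ range (n - 1 + 1) := by rw [Finset.mem_range]; omega
    refine Set.mem_setOf.mpr (le_trans ?_ (Finset.le_sup' (fun k => M k ω) hk))
    rw [hcoe]
    have hjk : j - 1 + 1 = j := by omega
    have hsum : (∑ i ∈ range (j - 1 + 1), Y i ω) = ∑ i ∈ range j, (X i ω : ℝ) := by
      rw [hjk]
    rw [hMapp, hsum]
    set S : ℝ := ∑ i ∈ range j, (X i ω : ℝ) with hS
    have hEj : E ^ (j - 1 + 1) ≤ Real.exp (j * (t / lam) + j * (t / lam) ^ 2) := by
      calc E ^ (j - 1 + 1) ≤ (Real.exp (t / lam + (t / lam) ^ 2)) ^ (j - 1 + 1) :=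
            pow_le_pow_left₀ hEpos.le hEb _
        _ = Real.exp ((j - 1 + 1 : ℕ) * (t / lam + (t / lam) ^ 2)) := by
            rw [← Real.exp_nat_mul]
        _ = Real.exp (j * (t / lam) + j * (t / lam) ^ 2) := by
            rw [hjk]; congr 1; ring
    have hexpos := Real.exp_pos (j * (t / lam) + j * (t / lam) ^ 2)
    calc Real.exp (a - n * (t / lam) ^ 2)
        ≤ Real.exp (t * S - j * (t / lam) - j * (t / lam) ^ 2) := by
          apply Real.exp_le_exp.mpr
          have h6 : t * (S - j / lam) = t * S - j * (t / lam) := by ring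
          have h7 : (j : ℝ) * (t / lam) ^ 2 ≤ n * (t / lam) ^ 2 := by
            have : (j : ℝ) ≤ n := by exact_mod_cast hjn
            nlinarith [sq_nonneg (t / lam)]
          linarith [hja, h6 ▸ hja]
      _ = Real.exp (t * S) / Real.exp (j * (t / lam) + j * (t / lam) ^ 2) := by
          rw [← Real.exp_sub]; congr 1; ring
      _ ≤ Real.exp (t * S) / E ^ (j - 1 + 1) := by
          apply div_le_div_of_nonneg_left (Real.exp_pos _).le (pow_pos hEpos _) hEj
  refine le_trans (measure_mono hsubset) ?_
  have hA1 : (ε' : ℝ≥0∞) *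
      μ {ω | (ε' : ℝ) ≤ (range (n - 1 + 1)).sup' nonempty_range_add_one (fun k => M k ω)} ≤ 1 := by
    calc (ε' : ℝ≥0∞) * μ _ = ε' • μ _ := by rw [ENNReal.smul_def, smul_eq_mul]
      _ ≤ ENNReal.ofReal (∫ ω in
          {ω | (ε' : ℝ) ≤ (range (n - 1 + 1)).sup' nonempty_range_add_one fun k => M k ω},
          M (n - 1) ω ∂μ) := hmax
      _ ≤ ENNReal.ofReal (∫ ω, M (n - 1) ω ∂μ) := ENNReal.ofReal_le_ofReal
          (setIntegral_le_integral (hMint (n - 1)) (ae_of_all _ fun ω => hMnn _ ω))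
      _ = 1 := by rw [hintM (n - 1), ENNReal.ofReal_one]
  have h4 : μ {ω | (ε' : ℝ) ≤ (range (n - 1 + 1)).sup' nonempty_range_add_one (fun k => M k ω)} ≤
      (ε' : ℝ≥0∞)⁻¹ := by
    rw [ENNReal.le_inv_iff_mul_le, mul_comm]
    exact hA1
  refine h4.trans (le_of_eq ?_)
  have h8 : (ε' : ℝ≥0∞) = ENNReal.ofReal (Real.exp (a - n * (t / lam) ^ 2)) := rfl
  rw [h8, ← ENNReal.ofReal_inv_of_pos (Real.exp_pos _), ← Real.exp_neg]
  congr 1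
  ring


theorem stmt_10 (Ω : Type) (_ : MeasurableSpace Ω) (μ : Measure Ω)
    [IsProbabilityMeasure μ] (n : ℕ) (lam : ℝ) (hlam0 : 0 < lam) (hlam1 : lam ≤ 1)
    (X : ℕ → Ω → ℕ) (hmeas : ∀ i, Measurable (X i))
    (hindep : ProbabilityTheory.iIndepFun X μ)
    (hgeom : ∀ i, ∀ j : ℕ, 1 ≤ j →
      μ {ω | X i ω = j} = ENNReal.ofReal (lam * (1 - lam) ^ (j - 1)))
    (ε : ℝ) (hε0 : 0 ≤ ε) (hε1 : ε ≤ 1) :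
    μ {ω | ∃ j ∈ Icc 1 n,
        ε * n / lam < |(∑ i ∈ range j, (X i ω : ℝ)) - j / lam|} ≤
      ENNReal.ofReal (6 * Real.exp (-(ε ^ 2 * n) / 36)) := by
  rcases Nat.eq_zero_or_pos n with hn0 | hn
  · subst hn0
    have hempty : {ω : Ω | ∃ j ∈ Icc 1 0,
        ε * (0:ℕ) / lam < |(∑ i ∈ range j, (X i ω : ℝ)) - j / lam|} = ∅ := by
      ext ω
      simp only [Set.mem_setOf_eq, Set.mem_empty_iff_false, iff_false, not_exists]
      intro j hj
      rw [Finset.mem_Icc] at hj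
      omega
    rw [hempty, measure_empty]
    exact zero_le
  · set s : ℝ := min (ε * lam / 2) (lam / 3) with hsdef
    have hs0 : 0 ≤ s := le_min (by positivity) (by positivity)
    have hsl : s ≤ lam / 3 := min_le_right _ _
    have habsP : |s| ≤ lam / 3 := by rw [abs_of_nonneg hs0]; exact hsl
    have habsM : |(-s)| ≤ lam / 3 := by rw [abs_neg, abs_of_nonneg hs0]; exact hsl
    obtain ⟨hdP, hEbP⟩ := aux_mgf_bound lam s hlam0 hlam1 habsP
    obtain ⟨hdM, hEbM⟩ := aux_mgf_bound lam (-s) hlam0 hlam1 habsM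
    have hmgfbP : ∀ i : ℕ, Integrable (fun ω => Real.exp (s * (X i ω : ℝ))) μ ∧
        ∫ ω, Real.exp (s * (X i ω : ℝ)) ∂μ = lam * Real.exp s / (1 - (1 - lam) * Real.exp s) :=
      fun i => aux_mgf_eq μ lam hlam0 hlam1 (X i) (hmeas i) (hgeom i) s hdP
    have hmgfbM : ∀ i : ℕ, Integrable (fun ω => Real.exp (-s * (X i ω : ℝ))) μ ∧
        ∫ ω, Real.exp (-s * (X i ω : ℝ)) ∂μ =
          lam * Real.exp (-s) / (1 - (1 - lam) * Real.exp (-s)) :=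
      fun i => aux_mgf_eq μ lam hlam0 hlam1 (X i) (hmeas i) (hgeom i) (-s) hdM
    have htailP := aux_tail μ n hn lam hlam0 hlam1 X hmeas hindep hgeom s habsP
      (s * (ε * n / lam)) hmgfbP hdP hEbP
    have htailM := aux_tail μ n hn lam hlam0 hlam1 X hmeas hindep hgeom (-s) habsM
      (s * (ε * n / lam)) hmgfbM hdM hEbM
    have h9 : -(s * (ε * n / lam)) + n * (-s / lam) ^ 2
        = -(s * (ε * n / lam)) + n * (s / lam) ^ 2 := by ring
    rw [h9] at htailM
    set e : ℝ := Real.exp (-(s * (ε * n / lam)) + n * (s / lam) ^ 2) with hedef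
    have hsub : {ω : Ω | ∃ j ∈ Icc 1 n,
          ε * n / lam < |(∑ i ∈ range j, (X i ω : ℝ)) - j / lam|} ⊆
        {ω | ∃ j ∈ Icc 1 n,
            s * (ε * n / lam) ≤ s * ((∑ i ∈ range j, (X i ω : ℝ)) - j / lam)} ∪
        {ω | ∃ j ∈ Icc 1 n,
            s * (ε * n / lam) ≤ -s * ((∑ i ∈ range j, (X i ω : ℝ)) - j / lam)} := by
      rintro ω ⟨j, hj, hlt⟩
      rcases abs_cases ((∑ i ∈ range j, (X i ω : ℝ)) - j / lam) with ⟨habs, _⟩ | ⟨habs, _⟩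
      · left
        exact ⟨j, hj, mul_le_mul_of_nonneg_left (by linarith [habs ▸ hlt.le]) hs0⟩
      · right
        refine ⟨j, hj, ?_⟩
        have : ε * n / lam ≤ -((∑ i ∈ range j, (X i ω : ℝ)) - j / lam) := by
          rw [← habs]; exact hlt.le
        calc s * (ε * n / lam) ≤ s * -((∑ i ∈ range j, (X i ω : ℝ)) - j / lam) :=
              mul_le_mul_of_nonneg_left this hs0
          _ = -s * ((∑ i ∈ range j, (X i ω : ℝ)) - j / lam) := by ring
    have hkey : -(s * (ε * n / lam)) + n * (s / lam) ^ 2 ≤ -(ε ^ 2 * n) / 36 := by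
      have hn' : (0:ℝ) ≤ n := Nat.cast_nonneg n
      rcases le_or_gt (ε * lam / 2) (lam / 3) with hc | hc
      · have hs' : s = ε * lam / 2 := min_eq_left hc
        have e1 : s * (ε * n / lam) = ε ^ 2 * n / 2 := by
          rw [hs']; field_simp
        have e2 : (s / lam) ^ 2 = ε ^ 2 / 4 := by
          rw [hs']; rw [show ε * lam / 2 / lam = ε / 2 by field_simp]; ring
        rw [e1, e2]
        nlinarith [mul_nonneg (sq_nonneg ε) hn']
      · have hs' : s = lam / 3 := min_eq_right hc.le
        have hε23 : 2 / 3 ≤ ε := by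
          nlinarith [hc, hlam0]
        have e1 : s * (ε * n / lam) = ε * n / 3 := by
          rw [hs']; field_simp
        have e2 : (s / lam) ^ 2 = 1 / 9 := by
          rw [hs', show lam / 3 / lam = 1 / 3 by field_simp]; norm_num
        rw [e1, e2]
        nlinarith [mul_nonneg (mul_nonneg hε0 hε0) hn', mul_le_mul_of_nonneg_right hε1 hn',
          mul_le_mul_of_nonneg_right hε23 hn', mul_le_mul_of_nonneg_right
            (mul_le_mul_of_nonneg_right hε1 hε0) hn']
    have hee : e ≤ Real.exp (-(ε ^ 2 * n) / 36) := Real.exp_le_exp.mpr hkey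
    calc μ {ω | ∃ j ∈ Icc 1 n,
          ε * n / lam < |(∑ i ∈ range j, (X i ω : ℝ)) - j / lam|}
        ≤ μ ({ω | ∃ j ∈ Icc 1 n,
            s * (ε * n / lam) ≤ s * ((∑ i ∈ range j, (X i ω : ℝ)) - j / lam)} ∪
          {ω | ∃ j ∈ Icc 1 n,
            s * (ε * n / lam) ≤ -s * ((∑ i ∈ range j, (X i ω : ℝ)) - j / lam)}) :=
          measure_mono hsub
      _ ≤ μ {ω | ∃ j ∈ Icc 1 n,
            s * (ε * n / lam) ≤ s * ((∑ i ∈ range j, (X i ω : ℝ)) - j / lam)} +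
          μ {ω | ∃ j ∈ Icc 1 n,
            s * (ε * n / lam) ≤ -s * ((∑ i ∈ range j, (X i ω : ℝ)) - j / lam)} :=
          measure_union_le _ _
      _ ≤ ENNReal.ofReal e + ENNReal.ofReal e := add_le_add htailP htailM
      _ = ENNReal.ofReal (e + e) :=
          (ENNReal.ofReal_add (Real.exp_pos _).le (Real.exp_pos _).le).symm
      _ ≤ ENNReal.ofReal (6 * Real.exp (-(ε ^ 2 * n) / 36)) := by
          apply ENNReal.ofReal_le_ofReal
          have := Real.exp_pos (-(ε ^ 2 * n) / 36)
          linarith [hee]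
end

section
/- Let (Q_t)_{t≥0} be a nonnegative integer-valued submartingale with respect to a filtration (F_t) such that sup_t E[Q_t] < ∞ and the increment Q_{t+1} − Q_t is nonzero with conditional probability bounded below by some fixed p > 0 at every time step. Then a contradiction follows; i.e., no such process exists. Equivalently: a nonnegative integer-valued submartingale whose increments are nonzero with conditional probability at least p > 0 at every step satisfies sup_t E[Q_t] = ∞. -/
open MeasureTheory
open scoped ENNReal NNReal

theorem stmt_19 (Ω : Type) (m : MeasurableSpace Ω) (μ : Measure Ω)
    [IsProbabilityMeasure μ] (F : Filtration ℕ m)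
    (Q : ℕ → Ω → ℝ) (hsub : Submartingale Q F μ)
    (hnonneg : ∀ t ω, 0 ≤ Q t ω)
    (hint : ∀ t ω, ∃ k : ℕ, Q t ω = k)
    (p : ℝ) (hp : 0 < p)
    (hjump : ∀ t, ∀ᵐ ω ∂μ,
      p ≤ (μ[Set.indicator {ω' | Q (t + 1) ω' ≠ Q t ω'} (fun _ => (1 : ℝ)) | F t]) ω) :
    ¬ ∃ C : ℝ, ∀ t : ℕ, ∫ ω, Q t ω ∂μ ≤ C := by
  rintro ⟨C, hC⟩
  have hQint : ∀ t, Integrable (Q t) μ := hsub.integrable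
  have hC0 : 0 ≤ C := le_trans (integral_nonneg (hnonneg 0)) (hC 0)
  -- L¹ bound
  have hbdd : ∀ n, eLpNorm (Q n) 1 μ ≤ (C.toNNReal : ℝ≥0∞) := by
    intro n
    rw [eLpNorm_one_eq_lintegral_enorm]
    have h1 : ∀ ω, (‖Q n ω‖₊ : ℝ≥0∞) = ENNReal.ofReal (Q n ω) := fun ω =>
      Real.enorm_eq_ofReal (hnonneg n ω)
    calc ∫⁻ ω, (‖Q n ω‖₊ : ℝ≥0∞) ∂μ = ∫⁻ ω, ENNReal.ofReal (Q n ω) ∂μ := by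
          simp_rw [h1]
      _ = ENNReal.ofReal (∫ ω, Q n ω ∂μ) := by
          rw [← ofReal_integral_eq_lintegral_ofReal (hQint n)
            (Filter.Eventually.of_forall (hnonneg n))]
      _ ≤ ENNReal.ofReal C := ENNReal.ofReal_le_ofReal (hC n)
      _ = (C.toNNReal : ℝ≥0∞) := by rw [ENNReal.ofReal]
  have hconv := hsub.exists_ae_tendsto_of_bdd hbdd
  -- jump sets
  set s : ℕ → Set Ω := fun n => Nat.casesOn n ∅ (fun k => {ω' | Q (k + 1) ω' ≠ Q k ω'}) with hs_def
  have hs : ∀ n, MeasurableSet[F n] (s n) := by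
    intro n
    cases n with
    | zero => exact @MeasurableSet.empty _ (F 0)
    | succ k =>
      have h1 : Measurable[F (k + 1)] (Q (k + 1)) := (hsub.stronglyAdapted (k + 1)).measurable
      have h2 : Measurable[F (k + 1)] (Q k) :=
        ((hsub.stronglyAdapted k).mono (F.mono (Nat.le_succ k))).measurable
      exact (measurableSet_eq_fun h1 h2).compl
  have hlevy := ae_mem_limsup_atTop_iff μ hs
  -- lower bound on conditional expectations
  have hjump' : ∀ᵐ ω ∂μ, ∀ k : ℕ,
      p ≤ (μ[(s (k + 1)).indicator (1 : Ω → ℝ)|F k]) ω := by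
    rw [ae_all_iff]
    intro k
    exact hjump k
  have hFalse : ∀ᵐ ω ∂μ, False := by
    filter_upwards [hconv, hlevy, hjump'] with ω hω hlim hj
    obtain ⟨c, hc⟩ := hω
    -- infinitely many jumps
    have htend : Filter.Tendsto (fun n => ∑ k ∈ Finset.range n,
        (μ[(s (k + 1)).indicator (1 : Ω → ℝ)|F k]) ω) Filter.atTop Filter.atTop := by
      refine Filter.tendsto_atTop_mono (fun n => ?_)
        ((tendsto_natCast_atTop_atTop (R := ℝ)).atTop_mul_const hp)
      calc (n : ℝ) * p = ∑ _k ∈ Finset.range n, p := by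
            rw [Finset.sum_const, Finset.card_range, nsmul_eq_mul]
        _ ≤ _ := Finset.sum_le_sum fun k _ => hj k
    have hmem : ω ∈ Filter.limsup s Filter.atTop := hlim.mpr htend
    rw [Filter.mem_limsup_iff_frequently_mem] at hmem
    -- eventually constant by convergence + integrality
    have hcauchy : ∃ N : ℕ, ∀ n ≥ N, |Q n ω - c| < 1 / 2 := by
      have := (Metric.tendsto_atTop.mp hc) (1 / 2) (by norm_num)
      obtain ⟨N, hN⟩ := this
      exact ⟨N, fun n hn => by simpa [Real.dist_eq] using hN n hn⟩
    obtain ⟨N, hN⟩ := hcauchy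
    obtain ⟨n, hnN, hns⟩ := (Filter.frequently_atTop.mp hmem) (N + 1)
    obtain ⟨k, rfl⟩ := Nat.exists_eq_add_of_le hnN
    have hne : Q (N + 1 + k) ω ≠ Q (N + k) ω := by
      have : N + 1 + k = (N + k) + 1 := by omega
      rw [this] at hns ⊢
      exact hns
    obtain ⟨a, ha⟩ := hint (N + 1 + k) ω
    obtain ⟨b, hb⟩ := hint (N + k) ω
    have hab : (a : ℤ) ≠ b := by
      intro h
      apply hne
      rw [ha, hb]
      exact_mod_cast h
    have h1 : (1 : ℝ) ≤ |Q (N + 1 + k) ω - Q (N + k) ω| := by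
      rw [ha, hb]
      have h : (1 : ℤ) ≤ |(a : ℤ) - b| := Int.one_le_abs (sub_ne_zero.mpr hab)
      have h3 : (1 : ℝ) ≤ |((a : ℤ) : ℝ) - ((b : ℤ) : ℝ)| := by
        rw [← Int.cast_sub, ← Int.cast_abs]
        exact_mod_cast h
      simpa using h3
    have h2 : |Q (N + 1 + k) ω - Q (N + k) ω| < 1 := by
      calc |Q (N + 1 + k) ω - Q (N + k) ω|
          ≤ |Q (N + 1 + k) ω - c| + |c - Q (N + k) ω| := abs_sub_le _ _ _
        _ = |Q (N + 1 + k) ω - c| + |Q (N + k) ω - c| := by rw [abs_sub_comm c]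
        _ < 1 / 2 + 1 / 2 := add_lt_add (hN _ (by omega)) (hN _ (by omega))
        _ = 1 := by norm_num
    linarith

  obtain ⟨_, h⟩ := hFalse.exists
  exact h
end
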